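/- If H : Δ → ℝ satisfies generalized Shannon additivity with parameter α = 1, then H is permutation-invariant: for every n, every (p₁,...,pₙ) ∈ Δₙ, and every permutation π of {1,...,n}, H(p₁,...,pₙ) = H(p_{π(1)},...,p_{π(n)}). -/

import Mathlib

open Real

/-- A finite stochastic vector: nonnegative entries summing to 1. -/
def IsStochastic (l : List ℝ) : Prop :=
  (∀ x ∈ l, 0 ≤ x) ∧ l.sum = 1

/-- Generalized Shannon additivity with parameter `α`: merging two adjacent
components of a stochastic vector. Powers are real powers (`rpow`). -/
def GSA (α : ℝ) (H : List ℝ → ℝ) : Prop :=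
  ∀ (l₁ l₂ : List ℝ) (a b : ℝ), IsStochastic (l₁ ++ a :: b :: l₂) → 0 < a + b →
    H (l₁ ++ a :: b :: l₂) =
      H (l₁ ++ (a + b) :: l₂) + (a + b) ^ α * H [a / (a + b), b / (a + b)]

lemma stoch_perm {l l' : List ℝ} (hp : l.Perm l') (h : IsStochastic l) : IsStochastic l' :=
  ⟨fun x hx => h.1 x (hp.mem_iff.mpr hx), hp.sum_eq ▸ h.2⟩

lemma star2 (H : List ℝ → ℝ) (hH : GSA 1 H) (x y : ℝ) (hx : 0 ≤ x) (hy : 0 ≤ y)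
    (hxy : x + y ≤ 1) (hs : 0 < x + y) (hx1 : x < 1) :
    H [x + y, 1 - (x + y)] + (x + y) * H [x / (x + y), 1 - x / (x + y)] =
      H [x, 1 - x] + (1 - x) * H [y / (1 - x), 1 - y / (1 - x)] := by
  have h1x : (0:ℝ) < 1 - x := by linarith
  have hst : IsStochastic ([] ++ x :: y :: [1 - (x + y)]) := by
    constructor
    · intro z hz; simp at hz; rcases hz with rfl | rfl | rfl <;> linarith
    · simp; ring
  have h1 := hH [] [1 - (x + y)] x y hst hs
  have hst2 : IsStochastic ([x] ++ y :: (1 - (x + y)) :: []) := by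
    constructor
    · intro z hz; simp at hz; rcases hz with rfl | rfl | rfl <;> linarith
    · simp; ring
  have h2 := hH [x] [] y (1 - (x + y)) hst2 (by linarith)
  simp only [List.nil_append, List.cons_append, List.append_nil, Real.rpow_one] at h1 h2
  rw [show y + (1 - (x + y)) = 1 - x by ring] at h2
  rw [show y / (x + y) = 1 - x / (x + y) by
    rw [eq_sub_iff_add_eq, ← add_div, div_eq_one_iff_eq hs.ne']; ring] at h1
  rw [show (1 - (x + y)) / (1 - x) = 1 - y / (1 - x) by
    rw [eq_sub_iff_add_eq, ← add_div, div_eq_one_iff_eq h1x.ne']; ring] at h2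
  linarith [h1, h2]

lemma sym_half (H : List ℝ → ℝ) (hH : GSA 1 H) (a : ℝ) (ha : 0 < a) (ha2 : a ≤ 1/2) :
    H [a, 1 - a] = H [1 - a, 1 - (1 - a)] := by
  have hp : (0:ℝ) < 1 - a := by linarith
  have h1a : (1:ℝ) - a ≠ 0 := hp.ne'
  have h2a : (2:ℝ) * (1 - a) ≠ 0 := by positivity
  have E1 := star2 H hH a (1 - 2*a) ha.le (by linarith) (by linarith) (by linarith) (by linarith)
  rw [show a + (1 - 2*a) = 1 - a by ring] at E1
  have E2 := star2 H hH a a ha.le ha.le (by linarith) (by linarith) (by linarith)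
  rw [show a + a = 2*a by ring,
      show a / (2*a) = 1/2 by rw [div_eq_iff (by linarith : (0:ℝ) < 2*a).ne']; ring] at E2
  have E3 := star2 H hH (1 - 2*a) a (by linarith) ha.le (by linarith) (by linarith) (by linarith)
  rw [show 1 - 2*a + a = 1 - a by ring,
      show 1 - (1 - 2*a) = 2*a by ring,
      show a / (2*a) = 1/2 by rw [div_eq_iff (by linarith : (0:ℝ) < 2*a).ne']; ring] at E3
  have E4 := star2 H hH a (1/2 - a) ha.le (by linarith) (by linarith) (by linarith) (by linarith)
  rw [show a + (1/2 - a) = 1/2 by ring,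
      show a / (1/2) = 2*a by rw [div_eq_iff (by norm_num : ((1:ℝ)/2) ≠ 0)]; ring,
      show (1/2 - a) / (1 - a) = (1 - 2*a) / (2*(1 - a)) by
        rw [div_eq_div_iff h1a h2a]; ring] at E4
  have hu : 1 - (1 - 2*a) / (2*(1 - a)) = 1 / (2*(1 - a)) := by
    rw [eq_div_iff h2a, sub_mul, div_mul_cancel₀ _ h2a]; ring
  rw [hu] at E4
  have E5 := star2 H hH (1/2) (1/2 - a) (by norm_num) (by linarith) (by linarith) (by linarith)
    (by norm_num)
  rw [show 1/2 + (1/2 - a) = 1 - a by ring,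
      show (1:ℝ)/2 / (1 - a) = 1 / (2*(1 - a)) by rw [div_div],
      show (1/2 - a) / (1 - 1/2) = 1 - 2*a by
        rw [show (1:ℝ) - 1/2 = 1/2 by norm_num, div_eq_iff (by norm_num : ((1:ℝ)/2) ≠ 0)]; ring,
      show 1 - (1 - 2*a) = 2*a by ring] at E5
  have hsum : (1 - 2*a) / (2*(1 - a)) + a / (1 - a) = 1 / (2*(1 - a)) := by
    field_simp; ring
  have E6 := star2 H hH ((1 - 2*a) / (2*(1 - a))) (a / (1 - a))
    (div_nonneg (by linarith) (by linarith))
    (div_nonneg ha.le hp.le)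
    (by rw [hsum, div_le_one (by linarith : (0:ℝ) < 2*(1 - a))]; linarith)
    (by rw [hsum]; positivity)
    (by rw [div_lt_one (by linarith : (0:ℝ) < 2*(1 - a))]; linarith)
  rw [hsum, hu,
      show (1 - 2*a) / (2*(1 - a)) / (1 / (2*(1 - a))) = 1 - 2*a by
        field_simp,
      show a / (1 - a) / (1 / (2*(1 - a))) = 2*a by
        field_simp,
      show 1 - (1 - 2*a) = 2*a by ring] at E6
  have hw : (1 - a) * (1 / (2*(1 - a))) = 1/2 := by
    rw [mul_one_div, div_eq_div_iff h2a (by norm_num : (2:ℝ) ≠ 0)]; ring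
  have E6p : (1 - a) * H [1 / (2*(1 - a)), 1 - 1 / (2*(1 - a))] + (1/2) * H [1 - 2*a, 2*a]
      = (1 - a) * H [(1 - 2*a) / (2*(1 - a)), 1 / (2*(1 - a))] + (1/2) * H [2*a, 1 - 2*a] := by
    linear_combination (1 - a) * E6 + (H [2*a, 1 - 2*a] - H [1 - 2*a, 2*a]) * hw
  linear_combination E4 + E5 - E6p - E1 - E2 - E3

lemma pair_symm (H : List ℝ → ℝ) (hH : GSA 1 H) (x : ℝ) (hx0 : 0 ≤ x) (hx1 : x ≤ 1) :
    H [x, 1 - x] = H [1 - x, x] := by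
  have h10 : H [1, 0] = 0 := by
    have E := star2 H hH (1/2) (1/2) (by norm_num) (by norm_num) (by norm_num) (by norm_num)
      (by norm_num)
    norm_num at E
    linarith
  have h01 : H [0, 1] = 0 := by
    have E := star2 H hH 0 (1/2) le_rfl (by norm_num) (by norm_num) (by norm_num) (by norm_num)
    norm_num at E
    linarith
  rcases eq_or_lt_of_le hx0 with h0 | h0
  · rw [← h0]; norm_num; rw [h01, h10]
  rcases eq_or_lt_of_le hx1 with h1 | h1
  · rw [h1]; norm_num; rw [h01, h10]
  rcases le_or_gt x (1/2) with h2 | h2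
  · have := sym_half H hH x h0 h2
    rwa [show 1 - (1 - x) = x by ring] at this
  · have := sym_half H hH (1 - x) (by linarith) (by linarith)
    rw [show 1 - (1 - x) = x by ring] at this
    exact this.symm

lemma swap_adj (H : List ℝ → ℝ) (hH : GSA 1 H) (l₁ l₂ : List ℝ) (a b : ℝ)
    (hs : IsStochastic (l₁ ++ a :: b :: l₂)) :
    H (l₁ ++ a :: b :: l₂) = H (l₁ ++ b :: a :: l₂) := by
  have ha : 0 ≤ a := hs.1 a (by simp)
  have hb : 0 ≤ b := hs.1 b (by simp)
  rcases eq_or_lt_of_le (by linarith : (0:ℝ) ≤ a + b) with h0 | hab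
  · have ha0 : a = 0 := by linarith
    have hb0 : b = 0 := by linarith
    rw [ha0, hb0]
  · have hs2 : IsStochastic (l₁ ++ b :: a :: l₂) :=
      stoch_perm (List.Perm.append_left l₁ (List.Perm.swap b a l₂)) hs
    have g1 := hH l₁ l₂ a b hs hab
    have g2 := hH l₁ l₂ b a hs2 (by linarith)
    rw [Real.rpow_one] at g1 g2
    rw [show b + a = a + b by ring] at g2
    rw [show b / (a + b) = 1 - a / (a + b) by
      rw [eq_sub_iff_add_eq, ← add_div, div_eq_one_iff_eq hab.ne']; ring] at g1 g2
    have hsym := pair_symm H hH (a / (a + b)) (div_nonneg ha hab.le)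
      (by rw [div_le_one hab]; linarith)
    linear_combination g1 - g2 + (a + b) * hsym

lemma perm_key (H : List ℝ → ℝ) (hH : GSA 1 H) {l l' : List ℝ} (hp : l.Perm l') :
    ∀ l₀ : List ℝ, IsStochastic (l₀ ++ l) → H (l₀ ++ l) = H (l₀ ++ l') := by
  induction hp with
  | nil => intro l₀ _; rfl
  | cons x _ ih =>
      intro l₀ hs
      have h1 := ih (l₀ ++ [x]) (by simpa [List.append_assoc] using hs)
      simpa [List.append_assoc] using h1
  | swap x y l =>
      intro l₀ hs
      exact swap_adj H hH l₀ l y x hs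
  | trans p₁ p₂ ih₁ ih₂ =>
      intro l₀ hs
      rw [ih₁ l₀ hs, ih₂ l₀ (stoch_perm (List.Perm.append_left l₀ p₁) hs)]

theorem stmt_5 (H : List ℝ → ℝ) (hH : GSA 1 H)
    (l l' : List ℝ) (hl : IsStochastic l) (hperm : l.Perm l') :
    H l = H l' := by
  simpa using perm_key H hH hperm [] (by simpa using hl)
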